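/- Let n ≥ 3 be an integer and let α, β be real numbers with α + β = 2n/(n−2) and α > n/(n−2) > β ≥ 1. Then there exists a constant C > 0, depending only on n and β, such that for all a, b ∈ ℝ^n and all λ, μ > 0: ∫_{ℝ^n} U_{a,λ}(x)^α U_{b,μ}(x)^β dx ≤ C · ε(a, b, λ, μ)^β, where ε(a, b, λ, μ) = (μ/λ + λ/μ + λμ |a−b|²)^{−(n−2)/2}. -/

import Mathlib

open MeasureTheory

/-- The standard bubble `U_{a,λ}(x) = (λ/(1+λ²|x−a|²))^{(n-2)/2}` on `ℝⁿ`. -/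
noncomputable def bubble (n : ℕ) (a : EuclideanSpace ℝ (Fin n)) (lam : ℝ)
    (x : EuclideanSpace ℝ (Fin n)) : ℝ :=
  (lam / (1 + lam ^ 2 * ‖x - a‖ ^ 2)) ^ (((n : ℝ) - 2) / 2)

open Metric Set

set_option maxHeartbeats 1000000

lemma volume_singleton_euclidean {n : ℕ} (hn : n ≠ 0) (z : EuclideanSpace ℝ (Fin n)) :
    volume ({z} : Set (EuclideanSpace ℝ (Fin n))) = 0 := by
  rw [← Metric.closedBall_zero (x := z), Measure.addHaar_closedBall _ _ le_rfl,
    finrank_euclideanSpace_fin, zero_pow hn]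
  simp

/-- `‖x‖ ^ (-s)` is integrable on the unit ball when `s < n`. -/
lemma integrableOn_norm_rpow_ball {n : ℕ} {s : ℝ} (hs0 : 0 ≤ s) (hsn : s < n) :
    IntegrableOn (fun x : EuclideanSpace ℝ (Fin n) => ‖x‖ ^ (-s))
      (Metric.ball 0 1) volume := by
  classical
  have hn0 : n ≠ 0 := by
    rcases Nat.eq_zero_or_pos n with h | h
    · exfalso; rw [h] at hsn; push_cast at hsn; linarith
    · omega
  have hmeas : Measurable (fun x : EuclideanSpace ℝ (Fin n) => ‖x‖ ^ (-s)) := by fun_prop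
  constructor
  · exact hmeas.aestronglyMeasurable.restrict
  · rw [hasFiniteIntegral_iff_norm]
    set A : ℕ → Set (EuclideanSpace ℝ (Fin n)) := fun k =>
      {x | (1/2 : ℝ) ^ (k+1) < ‖x‖} ∩ closedBall 0 ((1/2 : ℝ) ^ k) with hA
    have cover : ball (0:EuclideanSpace ℝ (Fin n)) 1 ⊆ {0} ∪ ⋃ k, A k := by
      intro x hx
      rcases eq_or_ne x 0 with rfl | hx0
      · exact Or.inl rfl
      · right
        have hx1 : ‖x‖ < 1 := mem_ball_zero_iff.mp hx
        have hx0' : 0 < ‖x‖ := norm_pos_iff.mpr hx0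
        have hex : ∃ k : ℕ, (1/2 : ℝ) ^ k < ‖x‖ :=
          exists_pow_lt_of_lt_one hx0' (by norm_num)
        have hk : (1/2 : ℝ) ^ (Nat.find hex) < ‖x‖ := Nat.find_spec hex
        have hk0 : Nat.find hex ≠ 0 := by
          intro h
          rw [h] at hk; simp at hk; linarith
        obtain ⟨j, hj⟩ : ∃ j, Nat.find hex = j + 1 :=
          ⟨Nat.find hex - 1, (Nat.succ_pred_eq_of_pos (Nat.pos_of_ne_zero hk0)).symm⟩
        have hjmin : ¬ ((1/2 : ℝ) ^ j < ‖x‖) := Nat.find_min hex (by omega)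
        refine mem_iUnion.mpr ⟨j, ⟨?_, ?_⟩⟩
        · rw [← hj]; exact hk
        · exact mem_closedBall_zero_iff.mpr (not_lt.mp hjmin)
    set V := volume (ball (0:EuclideanSpace ℝ (Fin n)) 1) with hV
    have hVlt : V < ⊤ := measure_ball_lt_top
    have hone : ∀ m : ℕ, ((1/2 : ℝ)) ^ m = (2:ℝ) ^ (-(m:ℝ)) := by
      intro m
      rw [one_div, inv_pow, ← Real.rpow_natCast, ← Real.rpow_neg (by norm_num)]
    calc ∫⁻ x in ball (0:EuclideanSpace ℝ (Fin n)) 1, ENNReal.ofReal ‖‖x‖ ^ (-s)‖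
        ≤ ∫⁻ x in ({0} ∪ ⋃ k, A k : Set (EuclideanSpace ℝ (Fin n))),
            ENNReal.ofReal ‖‖x‖ ^ (-s)‖ :=
          lintegral_mono_set cover
      _ ≤ (∫⁻ x in ({0} : Set (EuclideanSpace ℝ (Fin n))), ENNReal.ofReal ‖‖x‖ ^ (-s)‖)
            + ∫⁻ x in (⋃ k, A k), ENNReal.ofReal ‖‖x‖ ^ (-s)‖ :=
          lintegral_union_le _ _ _
      _ ≤ 0 + ∑' k, ∫⁻ x in A k, ENNReal.ofReal ‖‖x‖ ^ (-s)‖ := by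
          gcongr
          · exact le_of_eq (setLIntegral_measure_zero _ _ (volume_singleton_euclidean hn0 0))
          · exact lintegral_iUnion_le _ _
      _ = ∑' k, ∫⁻ x in A k, ENNReal.ofReal ‖‖x‖ ^ (-s)‖ := by rw [zero_add]
      _ ≤ ∑' k, (ENNReal.ofReal ((2:ℝ)^s) * V) * (ENNReal.ofReal ((2:ℝ)^(s - (n:ℝ))))^k := by
          refine ENNReal.tsum_le_tsum fun k => ?_
          have hb : ∀ x ∈ A k, ENNReal.ofReal ‖‖x‖ ^ (-s)‖
              ≤ ENNReal.ofReal (((1/2:ℝ)^(k+1)) ^ (-s)) := by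
            intro x hx
            refine ENNReal.ofReal_le_ofReal ?_
            rw [Real.norm_of_nonneg (Real.rpow_nonneg (norm_nonneg _) _)]
            exact Real.rpow_le_rpow_of_nonpos (by positivity) hx.1.le
              (neg_nonpos.mpr hs0)
          have hreal : ((1/2:ℝ)^(k+1)) ^ (-s) * ((1/2:ℝ)^k) ^ n
              = (2:ℝ)^s * ((2:ℝ)^(s-(n:ℝ)))^k := by
            rw [hone (k+1), hone k, ← Real.rpow_natCast ((2:ℝ)^(-(k:ℝ))) n,
              ← Real.rpow_mul (by norm_num), ← Real.rpow_mul (by norm_num),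
              ← Real.rpow_natCast ((2:ℝ)^(s-(n:ℝ))) k, ← Real.rpow_mul (by norm_num),
              ← Real.rpow_add (by norm_num), ← Real.rpow_add (by norm_num)]
            congr 1
            push_cast
            ring
          calc ∫⁻ x in A k, ENNReal.ofReal ‖‖x‖ ^ (-s)‖
              ≤ ∫⁻ _x in A k, ENNReal.ofReal (((1/2:ℝ)^(k+1)) ^ (-s)) :=
                setLIntegral_mono measurable_const hb
            _ = ENNReal.ofReal (((1/2:ℝ)^(k+1)) ^ (-s)) * volume (A k) :=
                setLIntegral_const _ _
            _ ≤ ENNReal.ofReal (((1/2:ℝ)^(k+1)) ^ (-s)) *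
                  (ENNReal.ofReal (((1/2:ℝ)^k) ^ n) * V) := by
                gcongr
                refine le_trans (measure_mono inter_subset_right) ?_
                rw [Measure.addHaar_closedBall _ _ (by positivity), finrank_euclideanSpace_fin,
                  hV]
            _ = (ENNReal.ofReal ((2:ℝ)^s) * V) * (ENNReal.ofReal ((2:ℝ)^(s - (n:ℝ))))^k := by
                rw [← mul_assoc, ← ENNReal.ofReal_mul (by positivity), hreal,
                  ENNReal.ofReal_mul (by positivity), ENNReal.ofReal_pow (by positivity)]
                ring
      _ < ⊤ := by
          rw [ENNReal.tsum_mul_left, ENNReal.tsum_geometric]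
          refine ENNReal.mul_lt_top (ENNReal.mul_lt_top ENNReal.ofReal_lt_top hVlt) ?_
          rw [ENNReal.inv_lt_top]
          refine tsub_pos_iff_lt.mpr ?_
          exact ENNReal.ofReal_lt_one.mpr
            (Real.rpow_lt_one_of_one_lt_of_neg (by norm_num) (by linarith))

lemma indicator_ball_rpow_eq {n : ℕ} (c : EuclideanSpace ℝ (Fin n)) {R s : ℝ}
    (hR : 0 < R) (hs : 0 < s) (y : EuclideanSpace ℝ (Fin n)) :
    (Metric.ball c R).indicator (fun y => ‖y - c‖ ^ (-s)) y
      = R ^ (-s) * (Metric.ball (0 : EuclideanSpace ℝ (Fin n)) 1).indicator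
          (fun z => ‖z‖ ^ (-s)) (R⁻¹ • (y - c)) := by
  have hnorm : ‖R⁻¹ • (y - c)‖ = R⁻¹ * ‖y - c‖ := by
    rw [norm_smul, Real.norm_eq_abs, abs_of_pos (inv_pos.mpr hR)]
  by_cases h : ‖y - c‖ < R
  · rw [Set.indicator_of_mem (by rwa [mem_ball_iff_norm]),
      Set.indicator_of_mem (by
        rw [mem_ball_zero_iff, hnorm]
        rw [inv_mul_lt_iff₀ hR, mul_one]
        exact h)]
    rw [hnorm, Real.mul_rpow (by positivity) (norm_nonneg _), Real.inv_rpow hR.le,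
      ← Real.rpow_neg hR.le, neg_neg, ← mul_assoc, ← Real.rpow_add hR]
    simp
  · rw [Set.indicator_of_notMem (by rw [mem_ball_iff_norm]; exact h),
      Set.indicator_of_notMem (by
        rw [mem_ball_zero_iff, hnorm, not_lt]
        rw [le_inv_mul_iff₀ hR, mul_one]
        exact not_lt.mp h), mul_zero]

lemma ball_rpow_integral {n : ℕ} (c : EuclideanSpace ℝ (Fin n)) {R s : ℝ}
    (hR : 0 < R) (hs : 0 < s) (hsn : s < n) :
    Integrable ((Metric.ball c R).indicator (fun y => ‖y - c‖ ^ (-s))) volume ∧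
    (∫ y, (Metric.ball c R).indicator (fun y => ‖y - c‖ ^ (-s)) y)
      = R ^ ((n : ℝ) - s) *
        ∫ z in Metric.ball (0 : EuclideanSpace ℝ (Fin n)) 1, ‖z‖ ^ (-s) := by
  set g := (Metric.ball (0 : EuclideanSpace ℝ (Fin n)) 1).indicator
      (fun z => ‖z‖ ^ (-s)) with hg
  have hgint : Integrable g :=
    (integrableOn_norm_rpow_ball hs.le hsn).integrable_indicator measurableSet_ball
  have hid : ((Metric.ball c R).indicator (fun y => ‖y - c‖ ^ (-s)))
      = fun y => R ^ (-s) * g (R⁻¹ • (y - c)) :=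
    funext (indicator_ball_rpow_eq c hR hs)
  have hcomp : Integrable (fun y : EuclideanSpace ℝ (Fin n) => g (R⁻¹ • (y - c))) := by
    have h1 : Integrable (fun z : EuclideanSpace ℝ (Fin n) => g (R⁻¹ • z)) :=
      (integrable_comp_smul_iff volume g (inv_ne_zero hR.ne')).mpr hgint
    exact h1.comp_sub_right c
  constructor
  · rw [hid]; exact hcomp.const_mul _
  · rw [hid, integral_const_mul,
      integral_sub_right_eq_self (fun z => g (R⁻¹ • z)) c,
      Measure.integral_comp_inv_smul volume g R]
    rw [finrank_euclideanSpace_fin, smul_eq_mul, abs_of_pos (pow_pos hR n),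
      ← integral_indicator measurableSet_ball]
    rw [← mul_assoc, ← Real.rpow_natCast R n, ← Real.rpow_add hR]
    rw [show -s + (n:ℝ) = (n:ℝ) - s by ring]

lemma rpow_sum_le {u v q : ℝ} (hu : 0 ≤ u) (hv : 0 ≤ v) (hq : 0 ≤ q) :
    (u + v) ^ q ≤ 2 ^ q * (u ^ q + v ^ q) := by
  have h1 : u + v ≤ 2 * max u v := by
    rcases le_total u v with h | h
    · rw [max_eq_right h]; linarith
    · rw [max_eq_left h]; linarith
  calc (u + v) ^ q ≤ (2 * max u v) ^ q :=
        Real.rpow_le_rpow (by positivity) h1 hq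
    _ = 2 ^ q * (max u v) ^ q := Real.mul_rpow (by norm_num) (le_max_of_le_left hu)
    _ ≤ 2 ^ q * (u ^ q + v ^ q) := by
        refine mul_le_mul_of_nonneg_left ?_ (by positivity)
        rcases le_total u v with h | h
        · rw [max_eq_right h]
          exact le_add_of_nonneg_left (Real.rpow_nonneg hu q)
        · rw [max_eq_left h]
          exact le_add_of_nonneg_right (Real.rpow_nonneg hv q)

/-- if `(1+t)^2 ≤ B * F` then `F^(-e) ≤ B^e * (1+t)^(-(2e))`. -/
lemma rpow_neg_bound {F t B e : ℝ} (hF : 0 < F) (ht : 0 ≤ t) (hB : 0 < B) (he : 0 ≤ e)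
    (h : (1 + t) ^ 2 ≤ B * F) : F ^ (-e) ≤ B ^ e * (1 + t) ^ (-(2 * e)) := by
  have h1 : (1 + t) ^ 2 / B ≤ F := (div_le_iff₀ hB).mpr (by linarith [h])
  have h2 : F ^ (-e) ≤ ((1 + t) ^ 2 / B) ^ (-e) :=
    Real.rpow_le_rpow_of_nonpos (by positivity) h1 (neg_nonpos.2 he)
  refine h2.trans_eq ?_
  rw [Real.div_rpow (by positivity) hB.le, Real.rpow_neg hB.le,
    ← Real.rpow_natCast (1 + t) 2, ← Real.rpow_mul (by positivity)]
  rw [show ((2:ℕ):ℝ) * (-e) = -(2 * e) by push_cast; ring]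
  field_simp

/-- if `1 + t ≤ B * r` then `r^(-e) ≤ B^e * (1+t)^(-e)`. -/
lemma rpow_neg_bound' {r t B e : ℝ} (hr : 0 < r) (ht : 0 ≤ t) (hB : 0 < B) (he : 0 ≤ e)
    (h : 1 + t ≤ B * r) : r ^ (-e) ≤ B ^ e * (1 + t) ^ (-e) := by
  have h1 : (1 + t) / B ≤ r := (div_le_iff₀ hB).mpr (by linarith [h])
  have h2 : r ^ (-e) ≤ ((1 + t) / B) ^ (-e) :=
    Real.rpow_le_rpow_of_nonpos (by positivity) h1 (neg_nonpos.2 he)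
  refine h2.trans_eq ?_
  rw [Real.div_rpow (by positivity) hB.le, Real.rpow_neg hB.le]
  field_simp
lemma core_bound (n : ℕ) (hn0 : n ≠ 0) {p q : ℝ} (hq0 : 0 < q) (hqn : 2 * q < n)
    (hpn : (n : ℝ) < 2 * p) (hpq : p + q = n) :
    ∃ C : ℝ, 0 < C ∧ ∀ (c : EuclideanSpace ℝ (Fin n)) (m : ℝ), 0 < m →
      (∫ y : EuclideanSpace ℝ (Fin n),
          (1 + ‖y‖ ^ 2) ^ (-p) * (m / (1 + m ^ 2 * ‖y - c‖ ^ 2)) ^ q)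
        ≤ C * (m + 1 / m + m * ‖c‖ ^ 2) ^ (-q) := by
  have hqp : q < p := by linarith
  have hA : Integrable (fun y : EuclideanSpace ℝ (Fin n) => (1 + ‖y‖ ^ 2) ^ (-p)) := by
    have h := integrable_rpow_neg_one_add_norm_sq
      (E := EuclideanSpace ℝ (Fin n)) (μ := volume) (r := 2 * p)
      (by rw [finrank_euclideanSpace_fin]; exact hpn)
    simpa [show -(2 * p) / 2 = -p by ring] using h
  set A : ℝ := ∫ y : EuclideanSpace ℝ (Fin n), (1 + ‖y‖ ^ 2) ^ (-p) with hAdef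
  have hA0 : 0 ≤ A := integral_nonneg fun y => Real.rpow_nonneg (by positivity) _
  set K : ℝ := ∫ z in Metric.ball (0 : EuclideanSpace ℝ (Fin n)) 1, ‖z‖ ^ (-(2 * q))
    with hKdef
  have hK0 : 0 ≤ K :=
    setIntegral_nonneg measurableSet_ball fun z _ => Real.rpow_nonneg (norm_nonneg _) _
  have hA2 : Integrable (fun y : EuclideanSpace ℝ (Fin n) => (1 + ‖y‖) ^ (-(2 * p))) :=
    integrable_one_add_norm (by rw [finrank_euclideanSpace_fin]; exact hpn)
  set A2 : ℝ := ∫ y : EuclideanSpace ℝ (Fin n), (1 + ‖y‖) ^ (-(2 * p)) with hA2def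
  have hA20 : 0 ≤ A2 := integral_nonneg fun y => Real.rpow_nonneg (by positivity) _
  set c1 : ℝ := (8 : ℝ) ^ (p - q) * 2 ^ (2 * q) with hc1def
  set c2 : ℝ := (2 : ℝ) ^ (p - q) * 3 ^ (2 * q) with hc2def
  have hc1 : 0 < c1 := by positivity
  have hc2 : 0 < c2 := by positivity
  refine ⟨4 ^ q * (A + c1 * K + c2 * A2) + 1, ?_, ?_⟩
  · have h1 : (0:ℝ) ≤ 4 ^ q * (A + c1 * K + c2 * A2) := by
      have := mul_nonneg hc1.le hK0
      have := mul_nonneg hc2.le hA20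
      have h4 : (0:ℝ) ≤ (4:ℝ) ^ q := by positivity
      nlinarith
    linarith
  intro c m hm
  set R : ℝ := (1 + ‖c‖) / 2 with hRdef
  have hR : 0 < R := by positivity
  have hc1' : (1 : ℝ) ≤ 1 + ‖c‖ := by linarith [norm_nonneg c]
  set D : ℝ := m + 1 / m + m * ‖c‖ ^ 2 with hDdef
  have hD : 0 < D := by positivity
  obtain ⟨hIind, hIval⟩ := ball_rpow_integral c hR (s := 2 * q) (by positivity)
    (by exact_mod_cast hqn)
  set ind : EuclideanSpace ℝ (Fin n) → ℝ :=
    (Metric.ball c R).indicator (fun y => ‖y - c‖ ^ (-(2 * q))) with hinddef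
  have hind0 : ∀ y, 0 ≤ ind y := fun y =>
    Set.indicator_nonneg (fun z _ => Real.rpow_nonneg (norm_nonneg _) _) y
  set M : EuclideanSpace ℝ (Fin n) → ℝ := fun y =>
    4 ^ q * ((1 + ‖y‖ ^ 2) ^ (-p) +
      ((8 : ℝ) ^ (p - q) * (1 + ‖c‖) ^ (-(2 * (p - q))) * ind y +
        (2 : ℝ) ^ (p - q) * 3 ^ (2 * q) * (1 + ‖y‖) ^ (-(2 * p)))) with hMdef
  have hMint : Integrable M :=
    ((hA.add ((hIind.const_mul _).add (hA2.const_mul _))).const_mul _)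
  -- pointwise bound
  have hpt : ∀ y : EuclideanSpace ℝ (Fin n), y ≠ c →
      (1 + ‖y‖ ^ 2) ^ (-p) * (m / (1 + m ^ 2 * ‖y - c‖ ^ 2)) ^ q ≤ M y * D ^ (-q) := by
    intro y hy
    have hr0 : (0 : ℝ) < ‖y - c‖ := by
      rw [norm_pos_iff]
      exact sub_ne_zero_of_ne hy
    set r : ℝ := ‖y - c‖ with hrdef
    set F : ℝ := 1 + ‖y‖ ^ 2 with hFdef
    have hF0 : 0 < F := by positivity
    set G : ℝ := 1 / m + m * r ^ 2 with hGdef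
    have hG0 : 0 < G := by positivity
    have hstep0 : (m / (1 + m ^ 2 * r ^ 2)) ^ q = G ^ (-q) := by
      have e : m / (1 + m ^ 2 * r ^ 2) = G⁻¹ := by
        have e2 : 1 / m + m * r ^ 2 = (1 + m ^ 2 * r ^ 2) / m := by
          field_simp
        rw [hGdef, e2, inv_div]
      rw [e, Real.inv_rpow hG0.le, ← Real.rpow_neg hG0.le]
    have hnc : ‖c‖ ≤ ‖y‖ + r := by
      have h := norm_sub_le y (y - c)
      simpa [sub_sub_cancel] using h
    have claim1 : D ≤ 2 * (m * F + G) := by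
      have h1 : ‖c‖ ^ 2 ≤ 2 * ‖y‖ ^ 2 + 2 * r ^ 2 := by
        nlinarith [sq_nonneg (‖y‖ - r), norm_nonneg c, norm_nonneg y, hr0.le]
      have h2 : m * ‖c‖ ^ 2 ≤ m * (2 * ‖y‖ ^ 2 + 2 * r ^ 2) :=
        mul_le_mul_of_nonneg_left h1 hm.le
      have h3 : 0 < 1 / m := by positivity
      rw [hDdef, hFdef, hGdef]
      linarith [h2, h3, hm]
    have claim2 : D ^ q ≤ 4 ^ q * ((m * F) ^ q + G ^ q) := by
      calc D ^ q ≤ (2 * (m * F + G)) ^ q := Real.rpow_le_rpow hD.le claim1 hq0.le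
        _ = 2 ^ q * (m * F + G) ^ q := Real.mul_rpow (by norm_num) (by positivity)
        _ ≤ 2 ^ q * (2 ^ q * ((m * F) ^ q + G ^ q)) :=
            mul_le_mul_of_nonneg_left
              (rpow_sum_le (by positivity) hG0.le hq0.le) (by positivity)
        _ = 4 ^ q * ((m * F) ^ q + G ^ q) := by
            rw [← mul_assoc, ← Real.mul_rpow (by norm_num) (by norm_num)]
            norm_num
    -- the middle-term bound
    have hmG : m ^ q * G ^ (-q) = (1 / m ^ 2 + r ^ 2) ^ (-q) := by
      have e : 1 / m ^ 2 + r ^ 2 = G / m := by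
        rw [hGdef]
        field_simp [hm.ne']
      rw [e, Real.div_rpow hG0.le hm.le, Real.rpow_neg hm.le]
      field_simp
    have hkey : m ^ q * G ^ (-q) ≤ r ^ (-(2 * q)) := by
      rw [hmG]
      have h1 : r ^ 2 ≤ 1 / m ^ 2 + r ^ 2 := le_add_of_nonneg_left (by positivity)
      have h2 : (1 / m ^ 2 + r ^ 2) ^ (-q) ≤ (r ^ 2) ^ (-q) :=
        Real.rpow_le_rpow_of_nonpos (by positivity) h1 (neg_nonpos.2 hq0.le)
      refine h2.trans_eq ?_
      rw [← Real.rpow_natCast r 2, ← Real.rpow_mul hr0.le]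
      congr 1
      push_cast
      ring
    have hmid : m ^ q * F ^ (-(p - q)) * G ^ (-q) ≤
        (8 : ℝ) ^ (p - q) * (1 + ‖c‖) ^ (-(2 * (p - q))) * ind y +
          (2 : ℝ) ^ (p - q) * 3 ^ (2 * q) * (1 + ‖y‖) ^ (-(2 * p)) := by
      by_cases hyb : y ∈ Metric.ball c R
      · have hrR : r < R := by rwa [mem_ball_iff_norm] at hyb
        have hindy : ind y = r ^ (-(2 * q)) := by
          rw [hinddef]
          exact Set.indicator_of_mem hyb _
        have h8 : (1 + ‖y‖) ^ 2 ≤ 8 * F → True := fun _ => trivial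
        have hFb : F ^ (-(p - q)) ≤ (8 : ℝ) ^ (p - q) * (1 + ‖c‖) ^ (-(2 * (p - q))) := by
          refine rpow_neg_bound hF0 (norm_nonneg c) (by norm_num) (by linarith) ?_
          have h5 : (1 + ‖c‖) / 2 ≤ 1 + ‖y‖ := by
            rw [hRdef] at hrR
            linarith [hnc]
          rw [hFdef]
          nlinarith [sq_nonneg (1 - ‖y‖), norm_nonneg y, norm_nonneg c]
        have hb : m ^ q * F ^ (-(p - q)) * G ^ (-q)
            ≤ ((8 : ℝ) ^ (p - q) * (1 + ‖c‖) ^ (-(2 * (p - q)))) * r ^ (-(2 * q)) := by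
          have e : m ^ q * F ^ (-(p - q)) * G ^ (-q)
              = F ^ (-(p - q)) * (m ^ q * G ^ (-q)) := by ring
          rw [e]
          exact mul_le_mul hFb hkey (by positivity) (by positivity)
        rw [hindy]
        have : 0 ≤ (2 : ℝ) ^ (p - q) * 3 ^ (2 * q) * (1 + ‖y‖) ^ (-(2 * p)) := by positivity
        linarith [hb]
      · have hrR : R ≤ r := by
          rw [mem_ball_iff_norm, not_lt] at hyb
          exact hyb
        have hindy : ind y = 0 := by
          rw [hinddef]
          exact Set.indicator_of_notMem hyb _
        have hFb : F ^ (-(p - q)) ≤ (2 : ℝ) ^ (p - q) * (1 + ‖y‖) ^ (-(2 * (p - q))) := by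
          refine rpow_neg_bound hF0 (norm_nonneg y) (by norm_num) (by linarith) ?_
          rw [hFdef]
          nlinarith [sq_nonneg (1 - ‖y‖)]
        have hrb : r ^ (-(2 * q)) ≤ (3 : ℝ) ^ (2 * q) * (1 + ‖y‖) ^ (-(2 * q)) := by
          refine rpow_neg_bound' hr0 (norm_nonneg y) (by norm_num) (by positivity) ?_
          have h1 : ‖y‖ ≤ r + ‖c‖ := by
            have h := norm_add_le (y - c) c
            simpa [sub_add_cancel] using h
          rw [hRdef] at hrR
          linarith
        have hb : m ^ q * F ^ (-(p - q)) * G ^ (-q)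
            ≤ ((2 : ℝ) ^ (p - q) * (1 + ‖y‖) ^ (-(2 * (p - q)))) *
              ((3 : ℝ) ^ (2 * q) * (1 + ‖y‖) ^ (-(2 * q))) := by
          have e : m ^ q * F ^ (-(p - q)) * G ^ (-q)
              = F ^ (-(p - q)) * (m ^ q * G ^ (-q)) := by ring
          rw [e]
          exact mul_le_mul hFb (hkey.trans hrb) (by positivity) (by positivity)
        have he : ((2 : ℝ) ^ (p - q) * (1 + ‖y‖) ^ (-(2 * (p - q)))) *
              ((3 : ℝ) ^ (2 * q) * (1 + ‖y‖) ^ (-(2 * q)))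
            = (2 : ℝ) ^ (p - q) * 3 ^ (2 * q) * (1 + ‖y‖) ^ (-(2 * p)) := by
          have h1 : (0:ℝ) < 1 + ‖y‖ := by positivity
          rw [show ((1 : ℝ) + ‖y‖) ^ (-(2 * p))
              = (1 + ‖y‖) ^ (-(2 * (p - q)) + -(2 * q)) by congr 1; ring]
          rw [Real.rpow_add h1]
          ring
        rw [he] at hb
        rw [hindy]
        simpa [mul_zero, zero_add] using hb
    -- assemble
    have hGq : G ^ (-q) * G ^ q = 1 := by
      rw [← Real.rpow_add hG0]
      simp
    have hFq : F ^ (-p) * F ^ q = F ^ (-(p - q)) := by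
      rw [← Real.rpow_add hF0]
      congr 1
      ring
    have expand : (F ^ (-p) * G ^ (-q)) * (4 ^ q * ((m * F) ^ q + G ^ q))
        = 4 ^ q * (m ^ q * F ^ (-(p - q)) * G ^ (-q) + F ^ (-p)) := by
      rw [Real.mul_rpow hm.le hF0.le]
      calc (F ^ (-p) * G ^ (-q)) * (4 ^ q * (m ^ q * F ^ q + G ^ q))
          = 4 ^ q * (m ^ q * (F ^ (-p) * F ^ q) * G ^ (-q)
              + F ^ (-p) * (G ^ (-q) * G ^ q)) := by ring
        _ = 4 ^ q * (m ^ q * F ^ (-(p - q)) * G ^ (-q) + F ^ (-p)) := by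
            rw [hFq, hGq, mul_one]
    have main : (F ^ (-p) * G ^ (-q)) * D ^ q ≤ M y := by
      calc (F ^ (-p) * G ^ (-q)) * D ^ q
          ≤ (F ^ (-p) * G ^ (-q)) * (4 ^ q * ((m * F) ^ q + G ^ q)) :=
            mul_le_mul_of_nonneg_left claim2 (by positivity)
        _ = 4 ^ q * (m ^ q * F ^ (-(p - q)) * G ^ (-q) + F ^ (-p)) := expand
        _ ≤ 4 ^ q * (F ^ (-p) +
              ((8 : ℝ) ^ (p - q) * (1 + ‖c‖) ^ (-(2 * (p - q))) * ind y +
                (2 : ℝ) ^ (p - q) * 3 ^ (2 * q) * (1 + ‖y‖) ^ (-(2 * p)))) := by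
            refine mul_le_mul_of_nonneg_left ?_ (by positivity)
            linarith [hmid]
        _ = M y := by rw [hMdef]
    have hDq : D ^ q * D ^ (-q) = 1 := by
      rw [← Real.rpow_add hD]
      simp
    calc (1 + ‖y‖ ^ 2) ^ (-p) * (m / (1 + m ^ 2 * ‖y - c‖ ^ 2)) ^ q
        = (F ^ (-p) * G ^ (-q)) := by rw [hstep0]
      _ = ((F ^ (-p) * G ^ (-q)) * D ^ q) * D ^ (-q) := by
          rw [mul_assoc, hDq, mul_one]
      _ ≤ M y * D ^ (-q) :=
          mul_le_mul_of_nonneg_right main (Real.rpow_nonneg hD.le _)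
  -- a.e. facts
  have hae : ∀ᵐ (y : EuclideanSpace ℝ (Fin n)) ∂volume, y ≠ c := by
    rw [MeasureTheory.ae_iff]
    simp only [ne_eq, not_not, Set.setOf_eq_eq_singleton]
    exact volume_singleton_euclidean hn0 c
  have hintle : (∫ y : EuclideanSpace ℝ (Fin n),
      (1 + ‖y‖ ^ 2) ^ (-p) * (m / (1 + m ^ 2 * ‖y - c‖ ^ 2)) ^ q)
      ≤ (∫ y, M y) * D ^ (-q) := by
    rw [← integral_mul_const]
    refine integral_mono_of_nonneg ?_ (hMint.mul_const _) ?_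
    · exact Filter.Eventually.of_forall fun y => by positivity
    · filter_upwards [hae] with y hy using hpt y hy
  -- value of ∫ M
  have hMval : (∫ y, M y) ≤ 4 ^ q * (A + c1 * K + c2 * A2) := by
    have hsplit : (∫ y, M y) = 4 ^ q * (A +
        ((8 : ℝ) ^ (p - q) * (1 + ‖c‖) ^ (-(2 * (p - q))) * (∫ y, ind y) + c2 * A2)) := by
      have hInt1 : Integrable (fun x : EuclideanSpace ℝ (Fin n) =>
          (8 : ℝ) ^ (p - q) * (1 + ‖c‖) ^ (-(2 * (p - q))) * ind x) :=
        hIind.const_mul _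
      have hInt2 : Integrable (fun x : EuclideanSpace ℝ (Fin n) =>
          (2 : ℝ) ^ (p - q) * 3 ^ (2 * q) * (1 + ‖x‖) ^ (-(2 * p))) :=
        hA2.const_mul _
      have hInt3 : Integrable (fun x : EuclideanSpace ℝ (Fin n) =>
          (8 : ℝ) ^ (p - q) * (1 + ‖c‖) ^ (-(2 * (p - q))) * ind x +
            (2 : ℝ) ^ (p - q) * 3 ^ (2 * q) * (1 + ‖x‖) ^ (-(2 * p))) := hInt1.add hInt2
      rw [hMdef]
      rw [integral_const_mul]
      congr 1
      rw [integral_add hA hInt3, integral_add hInt1 hInt2,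
        integral_const_mul, integral_const_mul]
    rw [hsplit, hIval]
    have hmidle : (8 : ℝ) ^ (p - q) * (1 + ‖c‖) ^ (-(2 * (p - q))) *
        (R ^ ((n : ℝ) - 2 * q) * K) ≤ c1 * K := by
      have ht0 : (0:ℝ) < 1 + ‖c‖ := by positivity
      have e1 : R ^ ((n : ℝ) - 2 * q)
          = (1 + ‖c‖) ^ ((n : ℝ) - 2 * q) / 2 ^ ((n : ℝ) - 2 * q) := by
        rw [hRdef, Real.div_rpow ht0.le (by norm_num)]
      have e2 : (1 + ‖c‖) ^ (-(2 * (p - q))) * (1 + ‖c‖) ^ ((n : ℝ) - 2 * q)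
          = (1 + ‖c‖) ^ ((n : ℝ) - 2 * p) := by
        rw [← Real.rpow_add ht0]
        congr 1
        ring
      have h3 : (1 + ‖c‖) ^ ((n : ℝ) - 2 * p) ≤ 1 :=
        Real.rpow_le_one_of_one_le_of_nonpos hc1' (by linarith)
      have h4 : (2:ℝ) ^ ((n : ℝ) - 2 * q) ≥ 2 ^ (-(2*q)) := by
        apply Real.rpow_le_rpow_of_exponent_le (by norm_num)
        have : (0:ℝ) ≤ (n:ℝ) := Nat.cast_nonneg n
        linarith
      have h5 : (1 + ‖c‖) ^ (-(2 * (p - q))) * R ^ ((n : ℝ) - 2 * q) ≤ 2 ^ (2 * q) := by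
        rw [e1, mul_div_assoc', e2]
        rw [div_le_iff₀ (by positivity)]
        calc (1 + ‖c‖) ^ ((n : ℝ) - 2 * p) ≤ 1 := h3
          _ ≤ 2 ^ (2 * q) * 2 ^ ((n : ℝ) - 2 * q) := by
              rw [← Real.rpow_add (by norm_num)]
              refine Real.one_le_rpow (by norm_num) ?_
              have : (0:ℝ) ≤ (n:ℝ) := Nat.cast_nonneg n
              linarith
      calc (8 : ℝ) ^ (p - q) * (1 + ‖c‖) ^ (-(2 * (p - q))) * (R ^ ((n : ℝ) - 2 * q) * K)
          = (8 : ℝ) ^ (p - q) * ((1 + ‖c‖) ^ (-(2 * (p - q))) * R ^ ((n : ℝ) - 2 * q)) * K := by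
            ring
        _ ≤ (8 : ℝ) ^ (p - q) * (2 ^ (2 * q)) * K := by
            refine mul_le_mul_of_nonneg_right ?_ hK0
            exact mul_le_mul_of_nonneg_left h5 (by positivity)
        _ = c1 * K := by rw [hc1def]
    refine mul_le_mul_of_nonneg_left ?_ (by positivity)
    linarith [hmidle]
  refine hintle.trans ?_
  have hDq0 : (0:ℝ) ≤ D ^ (-q) := Real.rpow_nonneg hD.le _
  have := mul_le_mul_of_nonneg_right hMval hDq0
  calc (∫ y, M y) * D ^ (-q) ≤ (4 ^ q * (A + c1 * K + c2 * A2)) * D ^ (-q) := this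
    _ ≤ (4 ^ q * (A + c1 * K + c2 * A2) + 1) * D ^ (-q) := by
        refine mul_le_mul_of_nonneg_right ?_ hDq0
        linarith

/-- For exponents `α + β = 2n/(n−2)` with `α > n/(n−2) > β ≥ 1` there is a constant
`C = C(n,β) > 0` with `∫ U_{a,λ}^α·U_{b,μ}^β ≤ C·ε^β`, where
`ε = (μ/λ + λ/μ + λμ|a−b|²)^{−(n−2)/2}` is the bubble interaction. -/
theorem stmt_18 (n : ℕ) (hn : 3 ≤ n) (α β : ℝ)
    (hsum : α + β = 2 * (n : ℝ) / ((n : ℝ) - 2))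
    (hα : (n : ℝ) / ((n : ℝ) - 2) < α)
    (hβ : β < (n : ℝ) / ((n : ℝ) - 2)) (hβ1 : 1 ≤ β) :
    ∃ C : ℝ, 0 < C ∧
      ∀ (a b : EuclideanSpace ℝ (Fin n)) (lam mu : ℝ), 0 < lam → 0 < mu →
        (∫ x, bubble n a lam x ^ α * bubble n b mu x ^ β)
          ≤ C * ((mu / lam + lam / mu + lam * mu * ‖a - b‖ ^ 2) ^
              (-(((n : ℝ) - 2) / 2))) ^ β := by
  have hn2 : (2 : ℝ) < (n : ℝ) := by exact_mod_cast (by omega : 2 < n)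
  set ν : ℝ := ((n : ℝ) - 2) / 2 with hνdef
  have hν : 0 < ν := by rw [hνdef]; linarith
  set p : ℝ := ν * α with hpdef
  set q : ℝ := ν * β with hqdef
  have hβ0 : 0 < β := by linarith
  have hα0 : 0 < α := by
    have h1 : 0 < (n : ℝ) / ((n : ℝ) - 2) := div_pos (by linarith) (by linarith)
    linarith
  have hq0 : 0 < q := mul_pos hν hβ0
  have hfrac : ((n : ℝ) - 2) * ((n : ℝ) / ((n : ℝ) - 2)) = n := by
    rw [mul_comm, div_mul_eq_mul_div, mul_div_assoc, div_self (by linarith), mul_one]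
  have hqn : 2 * q < n := by
    have h1 : ((n : ℝ) - 2) * β < ((n : ℝ) - 2) * ((n : ℝ) / ((n : ℝ) - 2)) :=
      mul_lt_mul_of_pos_left hβ (by linarith)
    rw [hfrac] at h1
    rw [hqdef, hνdef]
    linarith
  have hpn : (n : ℝ) < 2 * p := by
    have h1 : ((n : ℝ) - 2) * ((n : ℝ) / ((n : ℝ) - 2)) < ((n : ℝ) - 2) * α :=
      mul_lt_mul_of_pos_left hα (by linarith)
    rw [hfrac] at h1
    rw [hpdef, hνdef]
    linarith
  have hpq : p + q = (n : ℝ) := by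
    rw [hpdef, hqdef, hνdef]
    have : ((n : ℝ) - 2) / 2 * α + ((n : ℝ) - 2) / 2 * β = ((n : ℝ) - 2) / 2 * (α + β) := by
      ring
    rw [this, hsum, div_mul_div_comm,
      show ((n:ℝ) - 2) * (2 * (n:ℝ)) = (n:ℝ) * (2 * ((n:ℝ) - 2)) by ring,
      mul_div_assoc, div_self (by nlinarith : (2:ℝ) * ((n:ℝ) - 2) ≠ 0), mul_one]
  obtain ⟨C, hC, hcore⟩ := core_bound n (by omega) hq0 hqn hpn hpq
  refine ⟨C, hC, ?_⟩
  intro a b lam mu hl hmu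
  set m : ℝ := mu / lam with hmdef
  have hm : 0 < m := by positivity
  set c : EuclideanSpace ℝ (Fin n) := lam • (b - a) with hcdef
  have hDbig : 0 < mu / lam + lam / mu + lam * mu * ‖a - b‖ ^ 2 := by positivity
  have hbase : mu / lam + lam / mu + lam * mu * ‖a - b‖ ^ 2
      = m + 1 / m + m * ‖c‖ ^ 2 := by
    have h1 : ‖c‖ = lam * ‖b - a‖ := by
      rw [hcdef, norm_smul, Real.norm_eq_abs, abs_of_pos hl]
    rw [h1, norm_sub_rev b a, hmdef]
    field_simp
  have hrhs : ((mu / lam + lam / mu + lam * mu * ‖a - b‖ ^ 2) ^ (-ν)) ^ β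
      = (m + 1 / m + m * ‖c‖ ^ 2) ^ (-q) := by
    rw [← Real.rpow_mul hDbig.le, hbase]
    congr 1
    rw [hqdef]
    ring
  -- pointwise change of variables identity
  have key : ∀ y : EuclideanSpace ℝ (Fin n),
      bubble n a lam (a + lam⁻¹ • y) ^ α * bubble n b mu (a + lam⁻¹ • y) ^ β
        = lam ^ n * ((1 + ‖y‖ ^ 2) ^ (-p) * (m / (1 + m ^ 2 * ‖y - c‖ ^ 2)) ^ q) := by
    intro y
    have hnormy : ‖a + lam⁻¹ • y - a‖ = lam⁻¹ * ‖y‖ := by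
      rw [add_sub_cancel_left, norm_smul, Real.norm_eq_abs, abs_of_pos (inv_pos.mpr hl)]
    have hvec : a + lam⁻¹ • y - b = lam⁻¹ • (y - c) := by
      rw [hcdef, smul_sub, smul_smul, inv_mul_cancel₀ hl.ne', one_smul]
      abel
    have hnormc : ‖a + lam⁻¹ • y - b‖ = lam⁻¹ * ‖y - c‖ := by
      rw [hvec, norm_smul, Real.norm_eq_abs, abs_of_pos (inv_pos.mpr hl)]
    have hb1 : bubble n a lam (a + lam⁻¹ • y) = (lam / (1 + ‖y‖ ^ 2)) ^ ν := by
      rw [bubble, hnormy, show lam ^ 2 * (lam⁻¹ * ‖y‖) ^ 2 = ‖y‖ ^ 2 from by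
        field_simp]
    have hb2 : bubble n b mu (a + lam⁻¹ • y)
        = (mu / (1 + m ^ 2 * ‖y - c‖ ^ 2)) ^ ν := by
      rw [bubble, hnormc, show mu ^ 2 * (lam⁻¹ * ‖y - c‖) ^ 2 = m ^ 2 * ‖y - c‖ ^ 2 from by
        rw [hmdef]; field_simp]
    have hF0 : (0:ℝ) < 1 + ‖y‖ ^ 2 := by positivity
    have hW0 : (0:ℝ) < 1 + m ^ 2 * ‖y - c‖ ^ 2 := by positivity
    rw [hb1, hb2, ← Real.rpow_mul (by positivity), ← Real.rpow_mul (by positivity)]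
    rw [show ν * α = p from hpdef.symm, show ν * β = q from hqdef.symm]
    have e1 : (lam / (1 + ‖y‖ ^ 2)) ^ p = lam ^ p * (1 + ‖y‖ ^ 2) ^ (-p) := by
      rw [Real.div_rpow hl.le hF0.le, Real.rpow_neg hF0.le]
      ring
    have e2 : (mu / (1 + m ^ 2 * ‖y - c‖ ^ 2)) ^ q
        = lam ^ q * (m / (1 + m ^ 2 * ‖y - c‖ ^ 2)) ^ q := by
      have hmu' : mu = lam * m := by
        rw [hmdef]
        field_simp
      rw [hmu', mul_div_assoc, Real.mul_rpow hl.le (by positivity)]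
    rw [e1, e2]
    have e3 : lam ^ p * lam ^ q = lam ^ n := by
      rw [← Real.rpow_add hl, hpq, Real.rpow_natCast]
    calc lam ^ p * (1 + ‖y‖ ^ 2) ^ (-p) * (lam ^ q * (m / (1 + m ^ 2 * ‖y - c‖ ^ 2)) ^ q)
        = (lam ^ p * lam ^ q) * ((1 + ‖y‖ ^ 2) ^ (-p)
            * (m / (1 + m ^ 2 * ‖y - c‖ ^ 2)) ^ q) := by ring
      _ = lam ^ n * ((1 + ‖y‖ ^ 2) ^ (-p) * (m / (1 + m ^ 2 * ‖y - c‖ ^ 2)) ^ q) := by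
          rw [e3]
  -- change of variables
  have hL : (∫ x, bubble n a lam x ^ α * bubble n b mu x ^ β)
      = ∫ y : EuclideanSpace ℝ (Fin n),
          (1 + ‖y‖ ^ 2) ^ (-p) * (m / (1 + m ^ 2 * ‖y - c‖ ^ 2)) ^ q := by
    have h1 : (∫ y : EuclideanSpace ℝ (Fin n),
        bubble n a lam (a + lam⁻¹ • y) ^ α * bubble n b mu (a + lam⁻¹ • y) ^ β)
        = lam ^ n * ∫ x, bubble n a lam x ^ α * bubble n b mu x ^ β := by
      rw [Measure.integral_comp_inv_smul volume
        (fun z => bubble n a lam (a + z) ^ α * bubble n b mu (a + z) ^ β) lam]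
      rw [integral_add_left_eq_self
        (fun x => bubble n a lam x ^ α * bubble n b mu x ^ β) a]
      rw [finrank_euclideanSpace_fin, smul_eq_mul, abs_of_pos (pow_pos hl n)]
    have h2 : (∫ y : EuclideanSpace ℝ (Fin n),
        bubble n a lam (a + lam⁻¹ • y) ^ α * bubble n b mu (a + lam⁻¹ • y) ^ β)
        = lam ^ n * ∫ y : EuclideanSpace ℝ (Fin n),
            (1 + ‖y‖ ^ 2) ^ (-p) * (m / (1 + m ^ 2 * ‖y - c‖ ^ 2)) ^ q := by
      rw [integral_congr_ae (Filter.Eventually.of_forall key)]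
      rw [integral_const_mul]
    have h3 := h1.symm.trans h2
    exact mul_left_cancel₀ (pow_ne_zero n hl.ne') h3
  rw [hL, hrhs]
  exact hcore c m hm
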